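/- arXiv:2605.22990 — 2 statements merged into one kernel-verified Lean document; each statement's English description precedes it below -/
import Mathlib

section
/- The update map commutes with the SE(3) action: define Φ_{p,q}(X) := X + V_{p,q}(X), where V_{p,q} is the kernelized drifting field. Then for every g = (R, t) ∈ SE(3) acting atom-wise on configurations, all p, q ∈ P(M), and every X ∈ M, Φ_{g♯p, g♯q}(g·X) = g · Φ_{p,q}(X). -/
/-!
STATEMENT 7: The update map `Φ_{p,q}(X) := X + V_{p,q}(X)`, where `V_{p,q}` is
the kernelized drifting field, commutes with the SE(3) action: for every
`g = (R, t) ∈ SE(3)` acting atom-wise on configurations, all `p, q ∈ P(M)`,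
and every `X ∈ M`, `Φ_{g♯p, g♯q}(g·X) = g · Φ_{p,q}(X)`.
-/

open MeasureTheory Matrix

noncomputable section

/-- The molecular configuration space `M = ℝ^{3N}` for `N` atoms, with the
Euclidean norm (coordinates indexed by atom `n` and spatial axis `i`). -/
abbrev Conf (N : ℕ) := EuclideanSpace ℝ (Fin N × Fin 3)

/-- Membership in `P(M)`: Borel probability measures absolutely continuous with
respect to Lebesgue measure. -/
def IsProbAC {N : ℕ} (μ : Measure (Conf N)) : Prop :=
  IsProbabilityMeasure μ ∧ μ ≪ volume

/-- The exponential kernel `k(X,Y) = exp(−‖X−Y‖/τ)`. -/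
def kern {N : ℕ} (τ : ℝ) (X Y : Conf N) : ℝ := Real.exp (-‖X - Y‖ / τ)

/-- The partition function `Z_μ(X) = ∫ k(X,Y) dμ(Y)`. -/
def Zpart {N : ℕ} (τ : ℝ) (μ : Measure (Conf N)) (X : Conf N) : ℝ :=
  ∫ Y, kern τ X Y ∂μ

/-- The kernel-weighted mean-shift vector
`V_μ(X) = (1/Z_μ(X)) ∫ k(X,Y)(Y − X) dμ(Y)`. -/
def meanShift {N : ℕ} (τ : ℝ) (μ : Measure (Conf N)) (X : Conf N) : Conf N :=
  (Zpart τ μ X)⁻¹ • ∫ Y, kern τ X Y • (Y - X) ∂μ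

/-- The kernelized drifting field `V_{p,q}(X) = V_p(X) − V_q(X)`. -/
def drift {N : ℕ} (τ : ℝ) (p q : Measure (Conf N)) (X : Conf N) : Conf N :=
  meanShift τ p X - meanShift τ q X

/-- Atom-wise rigid motion: `(g·X)⁽ⁿ⁾ = R x⁽ⁿ⁾ + t` for `g = (R, t)`. -/
def act {N : ℕ} (R : Matrix (Fin 3) (Fin 3) ℝ) (t : Fin 3 → ℝ) (X : Conf N) : Conf N :=
  WithLp.toLp 2 (fun p : Fin N × Fin 3 => (∑ j, R p.2 j * X (p.1, j)) + t p.2)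

/-- The update map `Φ_{p,q}(X) = X + V_{p,q}(X)`. -/
def updateMap {N : ℕ} (τ : ℝ) (p q : Measure (Conf N)) (X : Conf N) : Conf N :=
  X + drift τ p q X

/-! Auxiliary machinery -/
def actL (N : ℕ) (R : Matrix (Fin 3) (Fin 3) ℝ) : Conf N →ₗ[ℝ] Conf N where
  toFun X := WithLp.toLp 2 (fun p : Fin N × Fin 3 => ∑ j, R p.2 j * X (p.1, j))
  map_add' X Y := by
    ext p
    simp [mul_add, Finset.sum_add_distrib]
  map_smul' c X := by
    ext p
    simp [Finset.mul_sum]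
    exact Finset.sum_congr rfl fun j _ => by ring

def actCL (N : ℕ) (R : Matrix (Fin 3) (Fin 3) ℝ) : Conf N →L[ℝ] Conf N :=
  (actL N R).toContinuousLinearMap

def trv (N : ℕ) (t : Fin 3 → ℝ) : Conf N := WithLp.toLp 2 (fun p : Fin N × Fin 3 => t p.2)

lemma act_eq {N : ℕ} (R : Matrix (Fin 3) (Fin 3) ℝ) (t : Fin 3 → ℝ) (X : Conf N) :
    act R t X = actL N R X + trv N t := rfl

lemma act_sub {N : ℕ} (R : Matrix (Fin 3) (Fin 3) ℝ) (t : Fin 3 → ℝ) (X Y : Conf N) :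
    act R t X - act R t Y = actL N R (X - Y) := by
  rw [act_eq, act_eq, map_sub]
  abel

lemma act_continuous {N : ℕ} (R : Matrix (Fin 3) (Fin 3) ℝ) (t : Fin 3 → ℝ) :
    Continuous (act (N := N) R t) := by
  have h : act (N := N) R t = fun X => actCL N R X + trv N t := rfl
  rw [h]
  exact (actCL N R).continuous.add continuous_const

lemma mulVec_sq (R : Matrix (Fin 3) (Fin 3) ℝ) (hRR : Rᵀ * R = 1) (v : Fin 3 → ℝ) :
    ∑ i, (R.mulVec v i)^2 = ∑ i, (v i)^2 := by
  have h1 : ∑ i, (R.mulVec v i)^2 = R.mulVec v ⬝ᵥ R.mulVec v := by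
    simp [dotProduct, sq]
  have h2 : R.mulVec v ⬝ᵥ R.mulVec v = v ⬝ᵥ v := by
    rw [Matrix.dotProduct_mulVec, ← Matrix.mulVec_transpose, Matrix.mulVec_mulVec, hRR,
      Matrix.one_mulVec]
  rw [h1, h2]; simp [dotProduct, sq]

lemma norm_actL {N : ℕ} (R : Matrix (Fin 3) (Fin 3) ℝ)
    (hR : R ∈ Matrix.orthogonalGroup (Fin 3) ℝ) (X : Conf N) :
    ‖actL N R X‖ = ‖X‖ := by
  have hRR : Rᵀ * R = 1 := by
    have := Matrix.mem_orthogonalGroup_iff' (Fin 3) ℝ |>.mp hR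
    simpa [Matrix.star_eq_conjTranspose] using this
  rw [EuclideanSpace.norm_eq, EuclideanSpace.norm_eq]
  congr 1
  rw [Fintype.sum_prod_type, Fintype.sum_prod_type]
  refine Finset.sum_congr rfl fun n _ => ?_
  have := mulVec_sq R hRR (fun j => X (n, j))
  simpa [actL, Matrix.mulVec, dotProduct, sq_abs] using this

lemma kern_act {N : ℕ} (τ : ℝ) (R : Matrix (Fin 3) (Fin 3) ℝ)
    (hR : R ∈ Matrix.orthogonalGroup (Fin 3) ℝ) (t : Fin 3 → ℝ) (X Y : Conf N) :
    kern τ (act R t X) (act R t Y) = kern τ X Y := by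
  unfold kern
  rw [act_sub, norm_actL R hR]

lemma kern_continuous {N : ℕ} (τ : ℝ) (X : Conf N) :
    Continuous (fun Y => kern τ X Y) := by
  unfold kern
  fun_prop

lemma kern_nonneg {N : ℕ} (τ : ℝ) (X Y : Conf N) : 0 ≤ kern τ X Y := Real.exp_nonneg _

lemma kern_smul_bound {N : ℕ} {τ : ℝ} (hτ : 0 < τ) (X Y : Conf N) :
    ‖kern τ X Y • (Y - X)‖ ≤ τ := by
  rw [norm_smul, Real.norm_eq_abs, abs_of_nonneg (kern_nonneg τ X Y)]
  have hn : ‖Y - X‖ = ‖X - Y‖ := norm_sub_rev _ _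
  rw [hn]
  set r := ‖X - Y‖ with hr
  have hr0 : 0 ≤ r := norm_nonneg _
  unfold kern
  rw [← hr]
  have h1 : r / τ ≤ Real.exp (r / τ) :=
    le_trans (by linarith) (Real.add_one_le_exp (r / τ))
  have h2 : r ≤ τ * Real.exp (r / τ) := by
    have := mul_le_mul_of_nonneg_left h1 hτ.le
    rwa [mul_div_cancel₀ _ hτ.ne'] at this
  rw [neg_div, Real.exp_neg]
  rw [inv_mul_le_iff₀ (Real.exp_pos _)]
  linarith [h2, mul_comm τ (Real.exp (r / τ))]

lemma integrable_kern_smul {N : ℕ} {τ : ℝ} (hτ : 0 < τ) (μ : Measure (Conf N))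
    [IsFiniteMeasure μ] (X : Conf N) :
    Integrable (fun Y => kern τ X Y • (Y - X)) μ := by
  refine (integrable_const τ).mono' ?_ (Filter.Eventually.of_forall fun Y =>
    kern_smul_bound hτ X Y)
  exact ((kern_continuous τ X).smul (continuous_id.sub continuous_const)).aestronglyMeasurable

lemma Zpart_act {N : ℕ} (τ : ℝ) (R : Matrix (Fin 3) (Fin 3) ℝ)
    (hR : R ∈ Matrix.orthogonalGroup (Fin 3) ℝ) (t : Fin 3 → ℝ)
    (μ : Measure (Conf N)) (X : Conf N) :
    Zpart τ (μ.map (act R t)) (act R t X) = Zpart τ μ X := by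
  unfold Zpart
  rw [integral_map (act_continuous R t).aemeasurable
    (kern_continuous τ (act R t X)).aestronglyMeasurable]
  exact integral_congr_ae (Filter.Eventually.of_forall fun Y => kern_act τ R hR t X Y)

lemma meanShift_act {N : ℕ} {τ : ℝ} (hτ : 0 < τ) (R : Matrix (Fin 3) (Fin 3) ℝ)
    (hR : R ∈ Matrix.orthogonalGroup (Fin 3) ℝ) (t : Fin 3 → ℝ)
    (μ : Measure (Conf N)) [IsFiniteMeasure μ] (X : Conf N) :
    meanShift τ (μ.map (act R t)) (act R t X) = actL N R (meanShift τ μ X) := by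
  unfold meanShift
  rw [Zpart_act τ R hR t μ X]
  rw [_root_.map_smul]
  congr 1
  have hcont : Continuous (fun Y : Conf N => kern τ (act R t X) Y • (Y - act R t X)) :=
    (kern_continuous τ _).smul (continuous_id.sub continuous_const)
  rw [integral_map (act_continuous R t).aemeasurable hcont.aestronglyMeasurable]
  have heq : ∀ Y : Conf N, kern τ (act R t X) (act R t Y) • (act R t Y - act R t X)
      = actCL N R (kern τ X Y • (Y - X)) := by
    intro Y
    rw [kern_act τ R hR t X Y, act_sub]
    simp only [actCL, LinearMap.coe_toContinuousLinearMap']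
    exact (_root_.map_smul (actL N R) _ _).symm
  rw [integral_congr_ae (Filter.Eventually.of_forall heq)]
  rw [ContinuousLinearMap.integral_comp_comm _ (integrable_kern_smul hτ μ X)]
  rfl

/-- The update map commutes with the SE(3) action. -/
theorem updateMap_SE3_commutes {N : ℕ} (τ : ℝ) (hτ : 0 < τ)
    (R : Matrix (Fin 3) (Fin 3) ℝ)
    (hR : R ∈ Matrix.orthogonalGroup (Fin 3) ℝ) (hdet : R.det = 1)
    (t : Fin 3 → ℝ) (p q : Measure (Conf N)) (hp : IsProbAC p) (hq : IsProbAC q)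
    (X : Conf N) :
    updateMap τ (p.map (act R t)) (q.map (act R t)) (act R t X)
      = act R t (updateMap τ p q X) := by
  haveI := hp.1
  haveI := hq.1
  unfold updateMap drift
  rw [meanShift_act hτ R hR t p X, meanShift_act hτ R hR t q X]
  rw [act_eq, act_eq, map_add, map_sub]
  abel


end
end

section
/- The jointly normalized affinities computed from Kabsch-aligned pathways are invariant under the joint SE(3) action: let Y⋆ be a reference pathway, {X_j}_{j=1}^K a swarm of pathways, and for each i let R_i ∈ SO(3) and aligned pathway X̃_i = R_i(X_i − X̄_i) + Ȳ⋆ (centroids over all F·N atoms, broadcast). Suppose that when g = (R,t) ∈ SE(3) acts frame-wise on Y⋆ and on every X_j, the alignment rotations transform as R_i ↦ R R_i Rᵀ. Then the aligned pathways transform as X̃_i ↦ g·X̃_i, all pairwise aligned distances d(X̃_i, T_j) with T = (Y⋆, X̃_1, …, X̃_K) are unchanged, and therefore the logits L_{ij} = −d(X̃_i, T_j)/τ, the row and column softmaxes, and the geometric-mean joint affinities A_{ij} = √(σ_row(L)_{ij} · σ_col(L)_{ij}) are all invariant. -/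
/-!
STATEMENT 11: The jointly normalized affinities computed from Kabsch-aligned
pathways are invariant under the joint SE(3) action. With reference pathway
`Y⋆`, swarm `{X_j}`, alignment rotations `R_i ∈ SO(3)` and aligned pathways
`X̃_i = R_i(X_i − X̄_i) + Ȳ⋆`, suppose that when `g = (R,t) ∈ SE(3)` acts
frame-wise on `Y⋆` and every `X_j`, the alignment rotations transform as
`R_i ↦ R R_i Rᵀ`. Then the aligned pathways transform as `X̃_i ↦ g·X̃_i`, all
pairwise aligned distances `d(X̃_i, T_j)` (with `T = (Y⋆, X̃_1, …, X̃_K)`) are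
unchanged, and therefore the logits `L_{ij} = −d(X̃_i, T_j)/τ`, the row and
column softmaxes, and the geometric-mean joint affinities
`A_{ij} = √(σ_row(L)_{ij} σ_col(L)_{ij})` are all invariant.
-/

open Matrix

noncomputable section

/-- 3-dimensional Euclidean space for atom positions. -/
abbrev E3 := EuclideanSpace ℝ (Fin 3)

/-- Pathway space `(ℝ^{3N})^F`. -/
abbrev Pathw (F N : ℕ) := Fin F → Fin N → E3

/-- Pathway distance `d(X,Y) = (1/√(3M)) √(Σ_k Σ_n ‖X_k⁽ⁿ⁾ − Y_k⁽ⁿ⁾‖²)`. -/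
def pdist {F N : ℕ} (X Y : Pathw F N) : ℝ :=
  (Real.sqrt (3 * (F * N : ℕ)))⁻¹ * Real.sqrt (∑ k, ∑ n, ‖X k n - Y k n‖ ^ 2)

/-- Frame-wise SE(3) action on pathways: `(g·X)_k⁽ⁿ⁾ = R X_k⁽ⁿ⁾ + t`. -/
def pact {F N : ℕ} (R : Matrix (Fin 3) (Fin 3) ℝ) (t : E3) (X : Pathw F N) :
    Pathw F N :=
  fun k n => Matrix.toEuclideanLin R (X k n) + t

/-- Centroid of a pathway over all `M = F·N` atoms. -/
def pcent {F N : ℕ} (P : Pathw F N) : E3 :=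
  (((F * N : ℕ) : ℝ))⁻¹ • ∑ k, ∑ n, P k n

/-- Kabsch alignment of a pathway: `X̃ = R₀(X − X̄) + c` (centroid broadcast). -/
def palign {F N : ℕ} (R₀ : Matrix (Fin 3) (Fin 3) ℝ) (c : E3) (P : Pathw F N) :
    Pathw F N :=
  fun k n => Matrix.toEuclideanLin R₀ (P k n - pcent P) + c

/-- The aligned swarm: `X̃_i = R_i(X_i − X̄_i) + Ȳ⋆`. -/
def alignedSwarm {F N K : ℕ} (Ri : Fin K → Matrix (Fin 3) (Fin 3) ℝ)
    (Ystar : Pathw F N) (X : Fin K → Pathw F N) : Fin K → Pathw F N :=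
  fun i => palign (Ri i) (pcent Ystar) (X i)

/-- Augmented target set `T = (Y⋆, X̃_1, …, X̃_K)`. -/
def targets {F N K : ℕ} (Ystar : Pathw F N) (Xt : Fin K → Pathw F N) :
    Fin (K + 1) → Pathw F N :=
  Fin.cons Ystar Xt

/-- Pairwise logits `L_{ij} = −d(X̃_i, T_j)/τ`. -/
def logits {F N K : ℕ} (τ : ℝ) (Ri : Fin K → Matrix (Fin 3) (Fin 3) ℝ)
    (Ystar : Pathw F N) (X : Fin K → Pathw F N) :
    Fin K → Fin (K + 1) → ℝ :=
  fun i j =>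
    -(pdist (alignedSwarm Ri Ystar X i) (targets Ystar (alignedSwarm Ri Ystar X) j)) / τ

/-- Row softmax `σ_row(L)_{ij} = exp(L_{ij})/Σ_{j'} exp(L_{ij'})`. -/
def rowSoftmax {K : ℕ} (L : Fin K → Fin (K + 1) → ℝ) (i : Fin K)
    (j : Fin (K + 1)) : ℝ :=
  Real.exp (L i j) / ∑ j', Real.exp (L i j')

/-- Column softmax `σ_col(L)_{ij} = exp(L_{ij})/Σ_{i'} exp(L_{i'j})`. -/
def colSoftmax {K : ℕ} (L : Fin K → Fin (K + 1) → ℝ) (i : Fin K)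
    (j : Fin (K + 1)) : ℝ :=
  Real.exp (L i j) / ∑ i', Real.exp (L i' j)

/-- Geometric-mean joint affinities `A_{ij} = √(σ_row(L)_{ij} σ_col(L)_{ij})`
computed from the Kabsch-aligned pathway-distance logits. -/
def affinity {F N K : ℕ} (τ : ℝ) (Ri : Fin K → Matrix (Fin 3) (Fin 3) ℝ)
    (Ystar : Pathw F N) (X : Fin K → Pathw F N) :
    Fin K → Fin (K + 1) → ℝ :=
  fun i j =>
    Real.sqrt (rowSoftmax (logits τ Ri Ystar X) i j * colSoftmax (logits τ Ri Ystar X) i j)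


private lemma toEucl_mul (A B : Matrix (Fin 3) (Fin 3) ℝ) (v : E3) :
    Matrix.toEuclideanLin (A * B) v
      = Matrix.toEuclideanLin A (Matrix.toEuclideanLin B v) := by
  simp [Matrix.toEuclideanLin_apply, Matrix.mulVec_mulVec]

private lemma toEucl_one (v : E3) : Matrix.toEuclideanLin (1 : Matrix (Fin 3) (Fin 3) ℝ) v = v := by
  simp [Matrix.toEuclideanLin_apply]

open RealInnerProductSpace in
private lemma norm_toEucl {R : Matrix (Fin 3) (Fin 3) ℝ}
    (hR : R ∈ Matrix.orthogonalGroup (Fin 3) ℝ) (v : E3) :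
    ‖Matrix.toEuclideanLin R v‖ = ‖v‖ := by
  have h1 : Rᴴ * R = 1 := by
    have := (Matrix.mem_orthogonalGroup_iff' (n := Fin 3) (R := ℝ)).mp hR
    simpa [Matrix.star_eq_conjTranspose] using this
  have key : ⟪Matrix.toEuclideanLin R v, Matrix.toEuclideanLin R v⟫ = ⟪v, v⟫ := by
    have hadj : Matrix.toEuclideanLin Rᴴ
        = LinearMap.adjoint (Matrix.toEuclideanLin R) :=
      Matrix.toEuclideanLin_conjTranspose_eq_adjoint (𝕜 := ℝ) R
    calc ⟪Matrix.toEuclideanLin R v, Matrix.toEuclideanLin R v⟫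
        = ⟪v, LinearMap.adjoint (Matrix.toEuclideanLin R)
            (Matrix.toEuclideanLin R v)⟫ := by
          rw [LinearMap.adjoint_inner_right]
      _ = ⟪v, Matrix.toEuclideanLin Rᴴ (Matrix.toEuclideanLin R v)⟫ := by rw [hadj]
      _ = ⟪v, v⟫ := by rw [← toEucl_mul, h1, toEucl_one]
  rw [real_inner_self_eq_norm_sq, real_inner_self_eq_norm_sq] at key
  have := congrArg Real.sqrt key
  rwa [Real.sqrt_sq (norm_nonneg _), Real.sqrt_sq (norm_nonneg _)] at this

private lemma pcent_pact {F N : ℕ} (hF : F ≠ 0) (hN : N ≠ 0)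
    (R : Matrix (Fin 3) (Fin 3) ℝ) (t : E3) (P : Pathw F N) :
    pcent (pact R t P) = Matrix.toEuclideanLin R (pcent P) + t := by
  have hc : ((F * N : ℕ) : ℝ) ≠ 0 := by
    exact_mod_cast Nat.mul_ne_zero hF hN
  unfold pcent pact
  have hsum : (∑ k : Fin F, ∑ n : Fin N, (Matrix.toEuclideanLin R (P k n) + t))
      = Matrix.toEuclideanLin R (∑ k : Fin F, ∑ n : Fin N, P k n)
        + ((F * N : ℕ) : ℝ) • t := by
    have hcast : ((F * N : ℕ) : ℝ) • t = F • N • t := by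
      rw [Nat.cast_mul, mul_smul, Nat.cast_smul_eq_nsmul, Nat.cast_smul_eq_nsmul]
    rw [hcast]
    simp [Finset.sum_add_distrib, map_sum]
  rw [hsum, smul_add, ← (Matrix.toEuclideanLin R).map_smul, smul_smul,
    inv_mul_cancel₀ hc, one_smul]

private lemma pdist_pact {F N : ℕ} (R : Matrix (Fin 3) (Fin 3) ℝ)
    (hR : R ∈ Matrix.orthogonalGroup (Fin 3) ℝ) (t : E3) (A B : Pathw F N) :
    pdist (pact R t A) (pact R t B) = pdist A B := by
  unfold pdist pact
  congr 1
  congr 1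
  refine Finset.sum_congr rfl fun k _ => Finset.sum_congr rfl fun n _ => ?_
  have : Matrix.toEuclideanLin R (A k n) + t - (Matrix.toEuclideanLin R (B k n) + t)
      = Matrix.toEuclideanLin R (A k n - B k n) := by
    rw [map_sub]; abel
  rw [this, norm_toEucl hR]

/-- Invariance of the aligned pathways (up to the joint motion `g`), of all
pairwise aligned distances, of the logits, of the row and column softmaxes,
and of the joint affinities, under the joint SE(3) action with alignment
rotations transforming by conjugation `R_i ↦ R R_i Rᵀ`. -/
theorem affinity_SE3_invariant {F N K : ℕ} (τ : ℝ) (hτ : 0 < τ)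
    (R : Matrix (Fin 3) (Fin 3) ℝ)
    (hR : R ∈ Matrix.orthogonalGroup (Fin 3) ℝ) (hdet : R.det = 1)
    (t : E3)
    (Ri : Fin K → Matrix (Fin 3) (Fin 3) ℝ)
    (hRi : ∀ i, Ri i ∈ Matrix.orthogonalGroup (Fin 3) ℝ ∧ (Ri i).det = 1)
    (Ystar : Pathw F N) (X : Fin K → Pathw F N) :
    (∀ i, alignedSwarm (fun i => R * Ri i * Rᵀ) (pact R t Ystar)
        (fun j => pact R t (X j)) i = pact R t (alignedSwarm Ri Ystar X i)) ∧
    (∀ i j, pdist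
        (alignedSwarm (fun i => R * Ri i * Rᵀ) (pact R t Ystar)
          (fun j => pact R t (X j)) i)
        (targets (pact R t Ystar)
          (alignedSwarm (fun i => R * Ri i * Rᵀ) (pact R t Ystar)
            (fun j => pact R t (X j))) j)
      = pdist (alignedSwarm Ri Ystar X i)
          (targets Ystar (alignedSwarm Ri Ystar X) j)) ∧
    (∀ i j, logits τ (fun i => R * Ri i * Rᵀ) (pact R t Ystar)
        (fun j => pact R t (X j)) i j = logits τ Ri Ystar X i j) ∧
    (∀ i j, rowSoftmax (logits τ (fun i => R * Ri i * Rᵀ) (pact R t Ystar)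
          (fun j => pact R t (X j))) i j
        = rowSoftmax (logits τ Ri Ystar X) i j) ∧
    (∀ i j, colSoftmax (logits τ (fun i => R * Ri i * Rᵀ) (pact R t Ystar)
          (fun j => pact R t (X j))) i j
        = colSoftmax (logits τ Ri Ystar X) i j) ∧
    (∀ i j, affinity τ (fun i => R * Ri i * Rᵀ) (pact R t Ystar)
        (fun j => pact R t (X j)) i j = affinity τ Ri Ystar X i j) := by
  have hRtR : Rᵀ * R = 1 := by
    have h := (Matrix.mem_orthogonalGroup_iff' (n := Fin 3) (R := ℝ)).mp hR
    exact h
  have h1 : ∀ i, alignedSwarm (fun i => R * Ri i * Rᵀ) (pact R t Ystar)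
      (fun j => pact R t (X j)) i = pact R t (alignedSwarm Ri Ystar X i) := by
    intro i
    funext k n
    have hF : F ≠ 0 := k.pos.ne'
    have hN : N ≠ 0 := n.pos.ne'
    simp only [alignedSwarm, palign, pact]
    rw [pcent_pact hF hN R t (X i), pcent_pact hF hN R t Ystar]
    have hdiff : Matrix.toEuclideanLin R (X i k n) + t
        - (Matrix.toEuclideanLin R (pcent (X i)) + t)
        = Matrix.toEuclideanLin R (X i k n - pcent (X i)) := by
      rw [map_sub]; abel
    rw [hdiff, ← toEucl_mul]
    have hmat : R * Ri i * Rᵀ * R = R * Ri i := by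
      rw [Matrix.mul_assoc (R * Ri i), hRtR, Matrix.mul_one]
    rw [hmat, map_add, toEucl_mul]
    abel
  refine ⟨h1, ?_⟩
  have h2 : ∀ i j, pdist
      (alignedSwarm (fun i => R * Ri i * Rᵀ) (pact R t Ystar)
        (fun j => pact R t (X j)) i)
      (targets (pact R t Ystar)
        (alignedSwarm (fun i => R * Ri i * Rᵀ) (pact R t Ystar)
          (fun j => pact R t (X j))) j)
      = pdist (alignedSwarm Ri Ystar X i)
          (targets Ystar (alignedSwarm Ri Ystar X) j) := by
    intro i j
    rw [h1 i]
    induction j using Fin.cases with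
    | zero =>
        simp only [targets, Fin.cons_zero]
        exact pdist_pact R hR t _ _
    | succ j' =>
        simp only [targets, Fin.cons_succ]
        rw [h1 j']
        exact pdist_pact R hR t _ _
  refine ⟨h2, ?_⟩
  have hL : logits τ (fun i => R * Ri i * Rᵀ) (pact R t Ystar)
      (fun j => pact R t (X j)) = logits τ Ri Ystar X := by
    funext i j
    unfold logits
    rw [h2 i j]
  exact ⟨fun i j => by rw [hL], fun i j => by rw [hL], fun i j => by rw [hL],
    fun i j => by unfold affinity; rw [hL]⟩


end
end
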